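/- Let n ≥ 1 and let a : Fin n → ℝ be strictly decreasing with a i > 0 for all i. For λ : Fin n → ℝ satisfying the interlacing condition λ k < a k for all k, and a (k+1) < λ k for all k < n-1, define the point P(λ) ∈ EuclideanSpace ℝ (Fin n) by P(λ) k = Real.sqrt ((∏ i, (a k - λ i)) / (∏ i ∈ {i | i ≠ k}, (a k - a i))). Let λ⁰, λ¹ : Fin n → ℝ both satisfy the interlacing condition. For ε : Fin n → Bool write λ^ε for the function k ↦ λ^{ε k} k, and ¬ε for the pointwise negation of ε. Then the Euclidean length ‖P(λ^ε) - P(λ^{¬ε})‖ is the same for all ε : Fin n → Bool. (Theorem: all great diagonals of a parallelepiped bounded by confocal quadrics are equal.) -/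
import Mathlib


/-- The point of `ℝⁿ` with Jacobi (ellipsoidal) coordinates `λ : Fin n → ℝ` associated with
the strictly decreasing positive parameters `a : Fin n → ℝ`:
`P(λ) k = √( ∏ i (a k - λ i) / ∏_{i ≠ k} (a k - a i) )`. -/
noncomputable def jacobiPoint (n : ℕ) (a lam : Fin n → ℝ) : EuclideanSpace ℝ (Fin n) :=
  (WithLp.equiv 2 (Fin n → ℝ)).symm fun k =>
    Real.sqrt ((∏ i, (a k - lam i)) / (∏ i ∈ Finset.univ.filter (· ≠ k), (a k - a i)))

/-- The interlacing condition on Jacobi coordinates: `λ k < a k` for all `k` and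
`a (k+1) < λ k` whenever `k + 1 < n`. -/
def JacobiInterlaces (n : ℕ) (a lam : Fin n → ℝ) : Prop :=
  (∀ k, lam k < a k) ∧ ∀ (k : Fin n) (h : (k : ℕ) + 1 < n), a ⟨(k : ℕ) + 1, h⟩ < lam k

open Finset Polynomial

/-- Leading coefficient of the Lagrange basis polynomial. -/
lemma ivory_leadingCoeff_basis {n : ℕ} (a : Fin n → ℝ) (hinj : Function.Injective a)
    (k : Fin n) :
    (Lagrange.basis Finset.univ a k).leadingCoeff
      = (∏ i ∈ Finset.univ.erase k, (a k - a i))⁻¹ := by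
  rw [Lagrange.basis, Polynomial.leadingCoeff_prod, ← Finset.prod_inv_distrib]
  refine Finset.prod_congr rfl fun j hj => ?_
  rw [Lagrange.basisDivisor, leadingCoeff_mul, leadingCoeff_C,
    (monic_X_sub_C (a j)).leadingCoeff, mul_one]

/-- Divided-difference identity: for `deg p < n`,
`∑ k, p(a k) / ∏_{i≠k}(a k - a i) = coeff p (n-1)`. -/
lemma ivory_key_sum {n : ℕ} (a : Fin n → ℝ) (hinj : Function.Injective a) (p : ℝ[X])
    (hp : p.degree < n) :
    ∑ k, p.eval (a k) / ∏ i ∈ Finset.univ.filter (· ≠ k), (a k - a i) = p.coeff (n-1) := by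
  have hvs : Set.InjOn a (Finset.univ : Finset (Fin n)) := hinj.injOn
  have heq : p = Lagrange.interpolate Finset.univ a (fun i => p.eval (a i)) :=
    Lagrange.eq_interpolate hvs (by rwa [Finset.card_fin])
  conv_rhs => rw [heq, Lagrange.interpolate_apply]
  rw [Polynomial.finset_sum_coeff]
  refine Finset.sum_congr rfl fun k _ => ?_
  rw [Polynomial.coeff_C_mul]
  have hb : (Lagrange.basis Finset.univ a k).coeff (n - 1)
      = (∏ i ∈ Finset.univ.erase k, (a k - a i))⁻¹ := by
    rw [← ivory_leadingCoeff_basis a hinj k, Polynomial.leadingCoeff]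
    congr 1
    rw [Lagrange.natDegree_basis hvs (Finset.mem_univ k), Finset.card_fin]
  rw [hb, div_eq_mul_inv, Finset.filter_ne']

/-- The sum `∑ k, (∏ᵢ(a k - μ i) + ∏ᵢ(a k - ν i)) / ∏_{i≠k}(a k - a i)` only depends on
`∑ i, (μ i + ν i)`. -/
lemma ivory_sum_invariant {n : ℕ} (hn : 1 ≤ n) (a : Fin n → ℝ)
    (hinj : Function.Injective a)
    (μ ν μ' ν' : Fin n → ℝ) (hs : ∑ i, (μ i + ν i) = ∑ i, (μ' i + ν' i)) :
    ∑ k, ((∏ i, (a k - μ i)) + ∏ i, (a k - ν i)) / ∏ i ∈ Finset.univ.filter (· ≠ k), (a k - a i)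
      = ∑ k, ((∏ i, (a k - μ' i)) + ∏ i, (a k - ν' i))
          / ∏ i ∈ Finset.univ.filter (· ≠ k), (a k - a i) := by
  set Q : (Fin n → ℝ) → ℝ[X] := fun lam => Lagrange.nodal Finset.univ lam with hQ
  have hdegQ : ∀ lam, (Q lam).degree = (n : WithBot ℕ) := by
    intro lam; rw [hQ]; simp [Lagrange.degree_nodal]
  have hmonQ : ∀ lam, (Q lam).Monic := fun lam => Lagrange.nodal_monic
  have hsub : ∀ lam lam' : Fin n → ℝ, (Q lam - Q lam').degree < n := by
    intro lam lam'
    rcases eq_or_ne (Q lam) (Q lam') with h | h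
    · rw [h, sub_self, Polynomial.degree_zero]; exact WithBot.bot_lt_coe n
    · have := Polynomial.degree_sub_lt (p := Q lam) (q := Q lam')
        (by simp [hdegQ]) (hmonQ lam).ne_zero
        (by simp [(hmonQ lam).leadingCoeff, (hmonQ lam').leadingCoeff])
      rwa [hdegQ] at this
  have hdeg : (Q μ + Q ν - (Q μ' + Q ν')).degree < n := by
    have h1 : Q μ + Q ν - (Q μ' + Q ν') = (Q μ - Q μ') + (Q ν - Q ν') := by ring
    rw [h1]
    exact lt_of_le_of_lt (Polynomial.degree_add_le _ _) (max_lt (hsub μ μ') (hsub ν ν'))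
  have hnext : ∀ lam : Fin n → ℝ, (Q lam).coeff (n - 1) = -∑ i, lam i := by
    intro lam
    have h1 : (Q lam).natDegree = n := by rw [hQ]; simp [Lagrange.natDegree_nodal]
    have h2 := Polynomial.prod_X_sub_C_nextCoeff (s := (Finset.univ : Finset (Fin n))) lam
    rwa [← Lagrange.nodal_eq, Polynomial.nextCoeff_of_natDegree_pos (by rw [h1]; omega), h1]
      at h2
  have hcoeff : (Q μ + Q ν - (Q μ' + Q ν')).coeff (n - 1) = 0 := by
    simp only [Polynomial.coeff_sub, Polynomial.coeff_add, hnext]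
    have : ∑ i, μ i + ∑ i, ν i = ∑ i, μ' i + ∑ i, ν' i := by
      rw [← Finset.sum_add_distrib, ← Finset.sum_add_distrib]; exact hs
    linarith
  have hmain := ivory_key_sum a hinj _ hdeg
  rw [hcoeff] at hmain
  have heval : ∀ lam (k : Fin n), (Q lam).eval (a k) = ∏ i, (a k - lam i) := by
    intro lam k; rw [hQ]; exact Lagrange.eval_nodal
  simp only [Polynomial.eval_sub, Polynomial.eval_add, heval, sub_div] at hmain
  rw [Finset.sum_sub_distrib] at hmain
  linarith [hmain]

/-- Under the interlacing condition the quantity under the square root is nonnegative. -/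
lemma ivory_ratio_nonneg {n : ℕ} (a : Fin n → ℝ) (hmono : StrictAnti a) (lam : Fin n → ℝ)
    (hl : JacobiInterlaces n a lam) (k : Fin n) :
    0 ≤ (∏ i, (a k - lam i)) / ∏ i ∈ Finset.univ.filter (· ≠ k), (a k - a i) := by
  rw [Finset.filter_ne', ← Finset.mul_prod_erase Finset.univ _ (Finset.mem_univ k),
    mul_div_assoc, ← Finset.prod_div_distrib]
  have hfac : ∀ i ∈ Finset.univ.erase k, 0 < (a k - lam i) / (a k - a i) := by
    intro i hi
    have hik : i ≠ k := (Finset.mem_erase.mp hi).1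
    rcases lt_or_gt_of_ne hik with h | h
    · have h1 : (i : ℕ) + 1 < n := by
        have hk := k.isLt; have hik' : (i : ℕ) < (k : ℕ) := h; omega
      have h2 : a ⟨(i : ℕ) + 1, h1⟩ < lam i := hl.2 i h1
      have h3 : a k ≤ a ⟨(i : ℕ) + 1, h1⟩ := by
        apply hmono.antitone
        rw [Fin.le_def]
        exact h
      have h4 : a k < a i := hmono h
      exact div_pos_of_neg_of_neg (by linarith) (by linarith)
    · have h4 : a i < a k := hmono h
      have h5 : lam i < a i := hl.1 i
      exact div_pos (by linarith) (by linarith)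
  have := Finset.prod_pos hfac
  nlinarith [hl.1 k]

/-- **Ivory's Lemma in higher dimensions**: all great diagonals of a parallelepiped bounded
by confocal quadrics (given in Jacobi coordinates by `λ i ∈ {λ⁰ i, λ¹ i}`) have equal
Euclidean lengths. -/
theorem ivory_great_diagonals (n : ℕ) (hn : 1 ≤ n) (a : Fin n → ℝ)
    (ha : ∀ i, 0 < a i) (hmono : StrictAnti a)
    (lam0 lam1 : Fin n → ℝ)
    (h0 : JacobiInterlaces n a lam0) (h1 : JacobiInterlaces n a lam1)
    (sel : (Fin n → Bool) → Fin n → ℝ)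
    (hsel : ∀ (ε : Fin n → Bool) (k : Fin n), sel ε k = if ε k then lam1 k else lam0 k)
    (ε₁ ε₂ : Fin n → Bool) :
    ‖jacobiPoint n a (sel ε₁) - jacobiPoint n a (sel fun k => !ε₁ k)‖ =
      ‖jacobiPoint n a (sel ε₂) - jacobiPoint n a (sel fun k => !ε₂ k)‖ := by
  have hinj : Function.Injective a := hmono.injective
  -- notation
  set N : (Fin n → ℝ) → Fin n → ℝ := fun lam k => ∏ i, (a k - lam i) with hN
  set D : Fin n → ℝ := fun k => ∏ i ∈ Finset.univ.filter (· ≠ k), (a k - a i) with hD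
  set G : Fin n → ℝ := fun k => ∏ i, ((a k - lam0 i) * (a k - lam1 i)) with hG
  -- every selection satisfies the interlacing condition
  have hsel_int : ∀ ε, JacobiInterlaces n a (sel ε) := by
    intro ε
    constructor
    · intro k; rw [hsel]; cases ε k <;> simp [h0.1 k, h1.1 k]
    · intro k hk; rw [hsel]; cases ε k <;> simp [h0.2 k hk, h1.2 k hk]
  -- the norm as sqrt of a sum
  have hnorm : ∀ μ ν : Fin n → ℝ, ‖jacobiPoint n a μ - jacobiPoint n a ν‖
      = Real.sqrt (∑ k, (Real.sqrt (N μ k / D k) - Real.sqrt (N ν k / D k)) ^ 2) := by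
    intro μ ν
    rw [EuclideanSpace.norm_eq]
    congr 1
    refine Finset.sum_congr rfl fun k _ => ?_
    rw [Real.norm_eq_abs, sq_abs]
    rfl
  rw [hnorm, hnorm]
  congr 1
  -- per-ε expansion of the squared diagonal
  have hexp : ∀ ε : Fin n → Bool,
      ∑ k, (Real.sqrt (N (sel ε) k / D k) - Real.sqrt (N (sel fun k => !ε k) k / D k)) ^ 2
        = (∑ k, (N (sel ε) k + N (sel fun k => !ε k) k) / D k)
            - 2 * ∑ k, Real.sqrt (G k / D k ^ 2) := by
    intro ε
    rw [Finset.mul_sum, ← Finset.sum_sub_distrib]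
    refine Finset.sum_congr rfl fun k _ => ?_
    have hμ : 0 ≤ N (sel ε) k / D k := ivory_ratio_nonneg a hmono _ (hsel_int ε) k
    have hν : 0 ≤ N (sel fun k => !ε k) k / D k :=
      ivory_ratio_nonneg a hmono _ (hsel_int _) k
    have hprod : N (sel ε) k / D k * (N (sel fun k => !ε k) k / D k) = G k / D k ^ 2 := by
      rw [div_mul_div_comm, sq]
      congr 1
      rw [hN, hG, ← Finset.prod_mul_distrib]
      refine Finset.prod_congr rfl fun i _ => ?_
      rw [hsel, hsel]
      cases ε i <;> simp [mul_comm]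
    have hxy : Real.sqrt (N (sel ε) k / D k) * Real.sqrt (N (sel fun k => !ε k) k / D k)
        = Real.sqrt (G k / D k ^ 2) := by
      rw [← Real.sqrt_mul hμ, hprod]
    rw [sub_sq, Real.sq_sqrt hμ, Real.sq_sqrt hν, mul_assoc, hxy, add_div]
    ring
  rw [hexp ε₁, hexp ε₂]
  have hsum : ∑ i, (sel ε₁ i + sel (fun k => !ε₁ k) i)
      = ∑ i, (sel ε₂ i + sel (fun k => !ε₂ k) i) := by
    have h : ∀ (ε : Fin n → Bool) (i : Fin n),
        sel ε i + sel (fun k => !ε k) i = lam0 i + lam1 i := by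
      intro ε i
      rw [hsel, hsel]
      cases ε i <;> simp [add_comm]
    simp only [h]
  rw [ivory_sum_invariant hn a hinj _ _ _ _ hsum]
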